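/- For t ≥ 0 let E_t[Φ] be the set of all pairs (i,j) ∈ [m]×[k] such that π_t(i,j)[Φ] ∈ {−1,1}. Then the conditional joint distribution of the variables (|Φ_{ij}|)_{(i,j)∈E_t} given F_t is uniform over (V∖Z_t)^{E_t}: for every formula Φ ∈ Ω_k(n,m) and every map f : E_t[Φ] → V∖Z_t[Φ], the conditional probability given F_t of the event {∀(i,j) ∈ E_t[Φ] : |Φ′_{ij}| = f(i,j)}, evaluated at Φ, equals |V∖Z_t[Φ]|^{−|E_t[Φ]|}. -/

import Mathlib

open Finset MeasureTheory Filter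
open scoped ENNReal

attribute [local instance] Classical.propDecidable

namespace RandomKSAT

/-- A literal over `n` variables: a pair (variable, sign), `true` = positive occurrence. -/
abbrev Lit (n : ℕ) := Fin n × Bool

/-- A `k`-SAT formula with `n` variables and `m` (ordered) clauses, each an ordered
`k`-tuple of literals. -/
abbrev Formula (n m k : ℕ) := Fin m → Fin k → Lit n

instance formulaMS (n m k : ℕ) : MeasurableSpace (Formula n m k) := ⊤

/-- The probability of an event under the uniform distribution on `Ω_k(n,m)`. -/
noncomputable def Pr (n m k : ℕ) (A : Set (Formula n m k)) : ℝ :=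
  ((Finset.univ.filter (fun Φ : Formula n m k => Φ ∈ A)).card : ℝ) /
    ((Finset.univ : Finset (Formula n m k)).card : ℝ)

/-- Expectation of a random variable with respect to the uniform distribution. -/
noncomputable def EV (n m k : ℕ) (f : Formula n m k → ℝ) : ℝ :=
  (∑ Φ : Formula n m k, f Φ) / (Fintype.card (Formula n m k) : ℝ)

/-- The uniform probability measure on `Ω_k(n,m)`. -/
noncomputable def unif (n m k : ℕ) : Measure (Formula n m k) :=
  ((Fintype.card (Formula n m k) : ℝ≥0∞))⁻¹ • Measure.count

variable {n m k : ℕ}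

/-- A literal is true under an assignment. -/
def litTrue (σ : Fin n → Bool) (l : Lit n) : Prop := σ l.1 = l.2

/-- An assignment satisfies a formula if every clause contains a true literal. -/
def sat (σ : Fin n → Bool) (Φ : Formula n m k) : Prop := ∀ i, ∃ j, litTrue σ (Φ i j)

/-- The assignment `σ_Z`: variables in `Z` are false, all others true. -/
noncomputable def sigmaZ (Z : Finset (Fin n)) : Fin n → Bool :=
  fun x => if x ∈ Z then false else true

/-- Number of positive literals of clause `i`. -/
noncomputable def posCount (Φ : Formula n m k) (i : Fin m) : ℕ :=
  (Finset.univ.filter (fun j => (Φ i j).2 = true)).card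

/-- Clause `i` is all-negative. -/
def allNeg (Φ : Formula n m k) (i : Fin m) : Prop := ∀ j, (Φ i j).2 = false

/-- The set of indices of `Z`-unique clauses: exactly one positive literal with variable
outside `Z`, and no negative literal with variable in `Z`. -/
noncomputable def Uset (Φ : Formula n m k) (Z : Finset (Fin n)) : Finset (Fin m) :=
  Finset.univ.filter (fun i =>
    (Finset.univ.filter (fun j => (Φ i j).2 = true ∧ (Φ i j).1 ∉ Z)).card = 1 ∧
    ∀ j, (Φ i j).2 = false → (Φ i j).1 ∉ Z)

/-- `U_t(x)`: the number of `Z`-unique clauses in which `x` occurs positively. -/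
noncomputable def Ux (Φ : Formula n m k) (Z : Finset (Fin n)) (x : Fin n) : ℕ :=
  ((Uset Φ Z).filter (fun i => ∃ j, Φ i j = (x, true))).card

/-- `k₁ = ⌈k/2⌉`. -/
def k1 (k : ℕ) : ℕ := (k + 1) / 2

/-- The map `π₀`: `Sum.inl b` records only the sign `b` of a literal, `Sum.inr l`
records the literal `l` itself (revealed). -/
noncomputable def pi0 (Φ : Formula n m k) (i : Fin m) (j : Fin k) : Bool ⊕ Lit n :=
  if i ∈ Uset Φ ∅ ∧ (Φ i j).2 = true then Sum.inr (Φ i j) else Sum.inl (Φ i j).2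

/-- State of the Phase-1 process: the set `Z_t`, the map `π_t`, the clause `φ_t`
and variable `z_t` chosen at the last step (if any), and whether the process stopped. -/
structure P1State (n m k : ℕ) where
  Z : Finset (Fin n)
  pi : Fin m → Fin k → Bool ⊕ Lit n
  lastPhi : Option (Fin m)
  lastZ : Option (Fin n)
  stopped : Bool

/-- One step (PI1--PI4) of the Phase-1 process. -/
noncomputable def p1step (Φ : Formula n m k) (s : P1State n m k) : P1State n m k :=
  if s.stopped then s else
  let E := Finset.univ.filter (fun i : Fin m => allNeg Φ i ∧ ∀ j, (Φ i j).1 ∉ s.Z)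
  if hE : E.Nonempty then
    if hk : 0 < k then
      let φt := E.min' hE
      let J := Finset.univ.filter
        (fun j : Fin k => j.val + 1 < k1 k ∧ Ux Φ s.Z ((Φ φt j).1) = 0)
      let jsel : Fin k :=
        if hJ : J.Nonempty then J.min' hJ
        else ⟨min (k1 k - 1) (k - 1), by
          have h1 := Nat.min_le_right (k1 k - 1) (k - 1); omega⟩
      let z := (Φ φt jsel).1
      let Z' := insert z s.Z
      { Z := Z'
        pi := fun i j =>
          if (i = φt ∧ j.val < k1 k) ∨ (Φ i j).1 ∈ Z' ∨
             (i ∈ Uset Φ Z' ∧ pi0 Φ i j = Sum.inl true)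
          then Sum.inr (Φ i j) else s.pi i j
        lastPhi := some φt
        lastZ := some z
        stopped := false }
    else { s with stopped := true, lastPhi := none, lastZ := none }
  else { s with stopped := true, lastPhi := none, lastZ := none }

/-- The Phase-1 process: state after `t` steps. -/
noncomputable def p1 (Φ : Formula n m k) : ℕ → P1State n m k
  | 0 => ⟨∅, pi0 Φ, none, none, false⟩
  | t + 1 => p1step Φ (p1 Φ t)

/-- The stopping time `T` of the Phase-1 process. -/
noncomputable def TT (Φ : Formula n m k) : ℕ := sInf {t | (p1 Φ (t + 1)).stopped = true}

/-- The set `Z = Z_T` produced by Phase 1. -/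
noncomputable def ZT (Φ : Formula n m k) : Finset (Fin n) := (p1 Φ (TT Φ)).Z

/-- The set `𝒰_t`: clauses with a positive literal, but such that at time `t` no
position shows `π_t(i,j) = 1` nor a negative literal with variable in `Z_t`. -/
noncomputable def curlyU (Φ : Formula n m k) (t : ℕ) : Finset (Fin m) :=
  Finset.univ.filter (fun i =>
    (∃ j, pi0 Φ i j ≠ Sum.inl false) ∧
    ¬ ∃ j, (p1 Φ t).pi i j = Sum.inl true ∨
      ∃ x ∈ (p1 Φ t).Z, (p1 Φ t).pi i j = Sum.inr (x, false))

/-- The map `ψ_t : 𝒰_t → V` (junk value outside `𝒰_t`). -/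
noncomputable def psi (hn : 0 < n) (Φ : Formula n m k) (t : ℕ) (i : Fin m) : Fin n :=
  let s := sInf {s | i ∈ curlyU Φ s}
  if h : (Finset.univ.filter
      (fun j : Fin k => (Φ i j).2 = true ∧ (Φ i j).1 ∉ (p1 Φ s).Z)).Nonempty then
    (Φ i ((Finset.univ.filter
      (fun j : Fin k => (Φ i j).2 = true ∧ (Φ i j).1 ∉ (p1 Φ s).Z)).min' h)).1
  else ((p1 Φ s).lastZ).getD ⟨0, hn⟩

/-- Clause `i` is `(Z,Z')`-endangered. -/
def endangered (Φ : Formula n m k) (Z Z' : Finset (Fin n)) (i : Fin m) : Prop :=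
  ¬ ∃ j, litTrue (sigmaZ Z) (Φ i j) ∧ (Φ i j).1 ∉ Z'

/-- A variable is `(Z,Z')`-unsafe. -/
def unsafeVar (Φ : Formula n m k) (Z Z' : Finset (Fin n)) (x : Fin n) : Prop :=
  x ∈ Z ∪ Z' ∨ ∃ i l, Φ i l = (x, true) ∧ ∀ j, j ≠ l →
    (((Φ i j).2 = true ∧ (Φ i j).1 ∈ Z ∪ Z') ∨ ((Φ i j).2 = false ∧ (Φ i j).1 ∉ Z))

/-- The Phase-2 while-loop with fuel. -/
noncomputable def p2go (Φ : Formula n m k) (Z : Finset (Fin n)) :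
    ℕ → Finset (Fin n) → Finset (Fin n)
  | 0, Z' => Z'
  | f + 1, Z' =>
    let Q := Finset.univ.filter (fun i : Fin m =>
      endangered Φ Z Z' i ∧
        (Finset.univ.filter (fun j => (Φ i j).1 ∈ Z')).card < 3)
    if hQ : Q.Nonempty then
      let i := Q.min' hQ
      let Ssafe := Finset.univ.filter (fun j : Fin k =>
        k1 k ≤ j.val ∧ j.val + 6 ≤ k ∧ ¬ unsafeVar Φ Z Z' ((Φ i j).1))
      let S := if 3 ≤ Ssafe.card then Ssafe
        else Finset.univ.filter (fun j : Fin k => k ≤ j.val + 5 ∧ (Φ i j).1 ∉ Z')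
      p2go Φ Z f (Z' ∪ (((S.sort (· ≤ ·)).take 3).map (fun j => (Φ i j).1)).toFinset)
    else Z'

/-- The set `Z'` produced by Phase 2. -/
noncomputable def p2 (Φ : Formula n m k) : Finset (Fin n) := p2go Φ (ZT Φ) m ∅

/-- `f` is a matching in the bipartite graph `G(Φ,Z,Z')` covering all
`(Z,Z')`-endangered clauses: it assigns to each endangered clause a variable of `Z'`
occurring in it, injectively on endangered clauses. -/
def coversEndangered (Φ : Formula n m k) (Z Z' : Finset (Fin n)) (f : Fin m → Fin n) : Prop :=
  (∀ i, endangered Φ Z Z' i → f i ∈ Z' ∧ ∃ j, (Φ i j).1 = f i) ∧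
  ∀ i i', endangered Φ Z Z' i → endangered Φ Z Z' i' → f i = f i' → i = i'

/-- The output of the algorithm `Fix` (Phase 3): the assignment `σ_{Z,Z',M}` if a
matching `M` covering all `(Z,Z')`-endangered clauses exists, `none` ("fail") otherwise. -/
noncomputable def fixOutput (Φ : Formula n m k) : Option (Fin n → Bool) :=
  if h : ∃ f : Fin m → Fin n, coversEndangered Φ (ZT Φ) (p2 Φ) f then
    some (fun x =>
      if x ∈ ZT Φ ∧ x ∉ p2 Φ then false
      else if ∃ i, endangered Φ (ZT Φ) (p2 Φ) i ∧ Classical.choose h i = x ∧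
          ∃ j, Φ i j = (x, false) then false
      else true)
  else none

/-- The `σ`-algebra `F_t` generated by the equivalence classes of `≡_t`. -/
noncomputable def Ft (n m k : ℕ) (t : ℕ) : MeasurableSpace (Formula n m k) :=
  MeasurableSpace.comap (fun Φ : Formula n m k => fun s : Fin (t + 1) => (p1 Φ s.val).pi) ⊤

/-- The `≡_t`-equivalence class of `Φ`. -/
noncomputable def cls (t : ℕ) (Φ : Formula n m k) : Finset (Formula n m k) :=
  Finset.univ.filter (fun Ψ => ∀ s ≤ t, (p1 Ψ s).pi = (p1 Φ s).pi)

/-- The set `E_t` of positions whose literal is not yet revealed at time `t`. -/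
noncomputable def Et (Φ : Formula n m k) (t : ℕ) : Finset (Fin m × Fin k) :=
  Finset.univ.filter (fun p => ∃ b, (p1 Φ t).pi p.1 p.2 = Sum.inl b)

/-- `ω = (1-ε) ln k`. -/
noncomputable def omOf (ε : ℝ) (k : ℕ) : ℝ := (1 - ε) * Real.log k

/-- `m = ⌊(1-ε) 2^k k⁻¹ (ln k) n⌋`. -/
noncomputable def mOf (ε : ℝ) (k n : ℕ) : ℕ := ⌊(1 - ε) * 2 ^ k * Real.log k / k * n⌋₊

/-- `θ = ⌊4 n k⁻¹ ln ω⌋`. -/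
noncomputable def thetaOf (ε : ℝ) (k n : ℕ) : ℕ := ⌊4 * (n : ℝ) / k * Real.log (omOf ε k)⌋₊

/-- The indicator random variable `B_t` of Corollary 9. -/
noncomputable def Bt (ε : ℝ) (n m k : ℕ) (t : ℕ) : Formula n m k → ℝ := fun Φ =>
  if t ≤ TT Φ ∧
      (∃ i, (p1 Φ t).lastPhi = some i ∧
        ∀ j : Fin k, j.val + 1 < k1 k → 0 < Ux Φ (p1 Φ (t - 1)).Z ((Φ i j).1)) ∧
      ((n : ℝ) * (k : ℝ) ^ (ε / 2 - 1) ≤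
        ((Finset.univ.filter (fun x : Fin n =>
          x ∉ (p1 Φ (t - 1)).Z ∧ Ux Φ (p1 Φ (t - 1)).Z x = 0)).card : ℝ)) ∧
      (((Uset Φ (p1 Φ t).Z).card : ℝ) ≤ (1 + ε / 3) * omOf ε k * n)
  then 1 else 0

/-- The indicator `H_{tij}`. -/
noncomputable def Hind (n m k : ℕ) (t : ℕ) (i : Fin m) (j : Fin k) : Formula n m k → ℝ :=
  fun Φ =>
  if (p1 Φ (t - 1)).pi i j = Sum.inl true ∧
      ∃ z, (p1 Φ t).lastZ = some z ∧ (p1 Φ t).pi i j = Sum.inr (z, true)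
  then 1 else 0

/-- The indicator `S_{tij}`. -/
noncomputable def Sind (n m k : ℕ) (t : ℕ) (i : Fin m) (j : Fin k) : Formula n m k → ℝ :=
  fun Φ => if t ≤ TT Φ ∧ ∃ b, (p1 Φ t).pi i j = Sum.inl b then 1 else 0


section Aux
variable {n m k : ℕ}

lemma P1State.ext' {s t : P1State n m k} (hZ : s.Z = t.Z) (hpi : s.pi = t.pi)
    (hl : s.lastPhi = t.lastPhi) (hz : s.lastZ = t.lastZ) (hs : s.stopped = t.stopped) :
    s = t := by cases s; cases t; simp_all

lemma p1step_stopped {Φ : Formula n m k} {σ : P1State n m k} (hs : σ.stopped = true) :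
    p1step Φ σ = σ := by simp [p1step, hs]

lemma p1step_noE {Φ : Formula n m k} {σ : P1State n m k} (hs : σ.stopped = false)
    (hE : ¬ (Finset.univ.filter
      (fun i : Fin m => allNeg Φ i ∧ ∀ j, (Φ i j).1 ∉ σ.Z)).Nonempty) :
    p1step Φ σ = { σ with stopped := true, lastPhi := none, lastZ := none } := by
  simp only [p1step, hs, Bool.false_eq_true, if_false]
  rw [dif_neg hE]

lemma p1step_k0 {Φ : Formula n m k} {σ : P1State n m k} (hs : σ.stopped = false)
    (hE : (Finset.univ.filter
      (fun i : Fin m => allNeg Φ i ∧ ∀ j, (Φ i j).1 ∉ σ.Z)).Nonempty)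
    (hk : ¬ 0 < k) :
    p1step Φ σ = { σ with stopped := true, lastPhi := none, lastZ := none } := by
  simp only [p1step, hs, Bool.false_eq_true, if_false]
  rw [dif_pos hE, dif_neg hk]

lemma p1step_main {Φ : Formula n m k} {σ : P1State n m k} (hs : σ.stopped = false)
    (hE : (Finset.univ.filter
      (fun i : Fin m => allNeg Φ i ∧ ∀ j, (Φ i j).1 ∉ σ.Z)).Nonempty)
    (hk : 0 < k) :
    p1step Φ σ =
      (fun φt : Fin m =>
        (fun jsel : Fin k =>
          (fun Z' : Finset (Fin n) =>
            ({ Z := Z'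
               pi := fun i j =>
                 if (i = φt ∧ j.val < k1 k) ∨ (Φ i j).1 ∈ Z' ∨
                    (i ∈ Uset Φ Z' ∧ pi0 Φ i j = Sum.inl true)
                 then Sum.inr (Φ i j) else σ.pi i j
               lastPhi := some φt
               lastZ := some ((Φ φt jsel).1)
               stopped := false } : P1State n m k))
            (insert ((Φ φt jsel).1) σ.Z))
        (if hJ : (Finset.univ.filter
            (fun j : Fin k => j.val + 1 < k1 k ∧ Ux Φ σ.Z ((Φ φt j).1) = 0)).Nonempty
          then (Finset.univ.filter
            (fun j : Fin k => j.val + 1 < k1 k ∧ Ux Φ σ.Z ((Φ φt j).1) = 0)).min' hJ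
          else ⟨min (k1 k - 1) (k - 1), by
            have h1 := Nat.min_le_right (k1 k - 1) (k - 1); omega⟩))
      ((Finset.univ.filter
        (fun i : Fin m => allNeg Φ i ∧ ∀ j, (Φ i j).1 ∉ σ.Z)).min' hE) := by
  simp only [p1step, hs, Bool.false_eq_true, if_false]
  rw [dif_pos hE, dif_pos hk]

end Aux

section Aux2
variable {n m k : ℕ}

lemma ite_cases' {α : Sort*} {C : Prop} [Decidable C] {a b : α} :
    (if C then a else b) = b ∨ (if C then a else b) = a := by
  by_cases h : C
  · right; rw [if_pos h]
  · left; rw [if_neg h]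

lemma p1step_pi_cases (Φ : Formula n m k) (σ : P1State n m k) (i : Fin m) (j : Fin k) :
    (p1step Φ σ).pi i j = σ.pi i j ∨ (p1step Φ σ).pi i j = Sum.inr (Φ i j) := by
  rcases Bool.eq_false_or_eq_true σ.stopped with hs | hs
  swap
  · by_cases hE : (Finset.univ.filter
        (fun i : Fin m => allNeg Φ i ∧ ∀ j, (Φ i j).1 ∉ σ.Z)).Nonempty
    · by_cases hk : 0 < k
      · simp only [p1step_main hs hE hk]
        exact ite_cases'
      · rw [p1step_k0 hs hE hk]; left; rfl
    · rw [p1step_noE hs hE]; left; rfl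
  · rw [p1step_stopped hs]; left; rfl

lemma p1step_dichot (Φ : Formula n m k) (σ : P1State n m k) :
    ((p1step Φ σ).Z = σ.Z ∧ (p1step Φ σ).pi = σ.pi) ∨
    ∀ i j, ((Φ i j).1 ∈ (p1step Φ σ).Z ∨
        (i ∈ Uset Φ (p1step Φ σ).Z ∧ pi0 Φ i j = Sum.inl true)) →
      (p1step Φ σ).pi i j = Sum.inr (Φ i j) := by
  rcases Bool.eq_false_or_eq_true σ.stopped with hs | hs
  swap
  · by_cases hE : (Finset.univ.filter
        (fun i : Fin m => allNeg Φ i ∧ ∀ j, (Φ i j).1 ∉ σ.Z)).Nonempty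
    · by_cases hk : 0 < k
      · right; intro i j h
        simp only [p1step_main hs hE hk] at h ⊢
        rw [if_pos]
        rcases h with h | h
        · exact Or.inr (Or.inl h)
        · exact Or.inr (Or.inr h)
      · rw [p1step_k0 hs hE hk]; exact Or.inl ⟨rfl, rfl⟩
    · rw [p1step_noE hs hE]; exact Or.inl ⟨rfl, rfl⟩
  · rw [p1step_stopped hs]; exact Or.inl ⟨rfl, rfl⟩

lemma p1step_Z_sub (Φ : Formula n m k) (σ : P1State n m k) : σ.Z ⊆ (p1step Φ σ).Z := by
  rcases Bool.eq_false_or_eq_true σ.stopped with hs | hs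
  swap
  · by_cases hE : (Finset.univ.filter
        (fun i : Fin m => allNeg Φ i ∧ ∀ j, (Φ i j).1 ∉ σ.Z)).Nonempty
    · by_cases hk : 0 < k
      · simp only [p1step_main hs hE hk]
        exact Finset.subset_insert _ _
      · rw [p1step_k0 hs hE hk]
    · rw [p1step_noE hs hE]
  · rw [p1step_stopped hs]

lemma pi0_spec (Φ : Formula n m k) (i : Fin m) (j : Fin k) :
    pi0 Φ i j = Sum.inl (Φ i j).2 ∨ pi0 Φ i j = Sum.inr (Φ i j) := by
  unfold pi0; split
  · right; rfl
  · left; rfl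

lemma pi_spec (Φ : Formula n m k) (s : ℕ) (i : Fin m) (j : Fin k) :
    (p1 Φ s).pi i j = Sum.inl (Φ i j).2 ∨ (p1 Φ s).pi i j = Sum.inr (Φ i j) := by
  induction s with
  | zero => exact pi0_spec Φ i j
  | succ s ih =>
    have hp : (p1 Φ (s+1)).pi = (p1step Φ (p1 Φ s)).pi := rfl
    rcases p1step_pi_cases Φ (p1 Φ s) i j with h | h
    · rw [hp, h]; exact ih
    · right; rw [hp, h]

lemma pi_inl {Φ : Formula n m k} {s : ℕ} {i : Fin m} {j : Fin k} {b : Bool}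
    (h : (p1 Φ s).pi i j = Sum.inl b) : (Φ i j).2 = b := by
  rcases pi_spec Φ s i j with h' | h' <;> rw [h'] at h <;> simp_all

lemma pi_inr {Φ : Formula n m k} {s : ℕ} {i : Fin m} {j : Fin k} {l : Lit n}
    (h : (p1 Φ s).pi i j = Sum.inr l) : Φ i j = l := by
  rcases pi_spec Φ s i j with h' | h' <;> rw [h'] at h <;> simp_all

lemma pi_mono {Φ : Formula n m k} {s u : ℕ} (hsu : s ≤ u) {i : Fin m} {j : Fin k} {l : Lit n}
    (h : (p1 Φ s).pi i j = Sum.inr l) : (p1 Φ u).pi i j = Sum.inr l := by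
  induction u, hsu using Nat.le_induction with
  | base => exact h
  | succ u hu ih =>
    rcases p1step_pi_cases Φ (p1 Φ u) i j with h' | h'
    · show (p1step Φ (p1 Φ u)).pi i j = _
      rw [h']; exact ih
    · show (p1step Φ (p1 Φ u)).pi i j = _
      rw [h', pi_inr ih]

lemma Z_mono {Φ : Formula n m k} {s u : ℕ} (hsu : s ≤ u) :
    (p1 Φ s).Z ⊆ (p1 Φ u).Z := by
  induction u, hsu using Nat.le_induction with
  | base => exact subset_rfl
  | succ u hu ih => exact ih.trans (p1step_Z_sub Φ (p1 Φ u))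

lemma Z_rev {Φ : Formula n m k} {s : ℕ} {i : Fin m} {j : Fin k}
    (h : (Φ i j).1 ∈ (p1 Φ s).Z) : (p1 Φ s).pi i j = Sum.inr (Φ i j) := by
  induction s with
  | zero => simp [p1] at h
  | succ s ih =>
    rcases p1step_dichot Φ (p1 Φ s) with ⟨hZ, hpi⟩ | hr
    · have hZ' : (p1 Φ (s+1)).Z = (p1 Φ s).Z := hZ
      have hpi' : (p1 Φ (s+1)).pi = (p1 Φ s).pi := hpi
      rw [hZ'] at h; rw [hpi']; exact ih h
    · exact hr i j (Or.inl h)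

lemma not_mem_Z_of_inl {Φ : Formula n m k} {s : ℕ} {i : Fin m} {j : Fin k} {b : Bool}
    (h : (p1 Φ s).pi i j = Sum.inl b) : (Φ i j).1 ∉ (p1 Φ s).Z := by
  intro hm
  rw [Z_rev hm] at h
  exact absurd h (by simp)

lemma Urev {Φ : Formula n m k} {s : ℕ} {i : Fin m} {j : Fin k}
    (hU : i ∈ Uset Φ (p1 Φ s).Z) (hpos : (Φ i j).2 = true) :
    (p1 Φ s).pi i j = Sum.inr (Φ i j) := by
  induction s with
  | zero =>
    show pi0 Φ i j = _
    unfold pi0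
    rw [if_pos ⟨hU, hpos⟩]
  | succ s ih =>
    by_cases hp : pi0 Φ i j = Sum.inl true
    · rcases p1step_dichot Φ (p1 Φ s) with ⟨hZ, hpi⟩ | hr
      · have hZ' : (p1 Φ (s+1)).Z = (p1 Φ s).Z := hZ
        have hpi' : (p1 Φ (s+1)).pi = (p1 Φ s).pi := hpi
        rw [hZ'] at hU; rw [hpi']; exact ih hU
      · exact hr i j (Or.inr ⟨hU, hp⟩)
    · rcases pi0_spec Φ i j with h' | h'
      · rw [hpos] at h'; exact absurd h' hp
      · exact pi_mono (Nat.zero_le _) h'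

end Aux2

section Aux3
variable {n m k : ℕ}

lemma Uset_congr {Φ Ψ : Formula n m k} {Z : Finset (Fin n)}
    (H1 : ∀ i j, (Ψ i j).2 = (Φ i j).2)
    (HZ : ∀ i j, ((Ψ i j).1 ∈ Z ↔ (Φ i j).1 ∈ Z)) :
    Uset Ψ Z = Uset Φ Z := by
  unfold Uset
  ext i
  simp only [Finset.mem_filter, Finset.mem_univ, true_and]
  have hfil : (Finset.univ.filter fun j : Fin k => (Ψ i j).2 = true ∧ (Ψ i j).1 ∉ Z)
      = (Finset.univ.filter fun j : Fin k => (Φ i j).2 = true ∧ (Φ i j).1 ∉ Z) := by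
    ext j
    simp only [Finset.mem_filter, Finset.mem_univ, true_and, H1 i j]
    exact and_congr_right fun _ => not_congr (HZ i j)
  rw [hfil]
  constructor <;> rintro ⟨h1, h2⟩
  · exact ⟨h1, fun j hj hm => h2 j (by rw [H1 i j]; exact hj) ((HZ i j).mpr hm)⟩
  · exact ⟨h1, fun j hj hm => h2 j (by rw [← H1 i j]; exact hj) ((HZ i j).mp hm)⟩

lemma Ux_congr {Φ Ψ : Formula n m k} {Z : Finset (Fin n)}
    (H1 : ∀ i j, (Ψ i j).2 = (Φ i j).2)
    (HZ : ∀ i j, ((Ψ i j).1 ∈ Z ↔ (Φ i j).1 ∈ Z))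
    (Hpos : ∀ i ∈ Uset Φ Z, ∀ j, (Φ i j).2 = true → Ψ i j = Φ i j) (x : Fin n) :
    Ux Ψ Z x = Ux Φ Z x := by
  unfold Ux
  rw [Uset_congr H1 HZ]
  congr 1
  apply Finset.filter_congr
  intro i hi
  constructor
  · rintro ⟨j, hj⟩
    have hsig : (Φ i j).2 = true := by rw [← H1 i j, hj]
    exact ⟨j, by rw [← Hpos i hi j hsig]; exact hj⟩
  · rintro ⟨j, hj⟩
    exact ⟨j, by rw [Hpos i hi j (by rw [hj])]; exact hj⟩

lemma Efilter_congr {Φ Ψ : Formula n m k} {Z : Finset (Fin n)}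
    (H1 : ∀ i j, (Ψ i j).2 = (Φ i j).2)
    (HZ : ∀ i j, ((Ψ i j).1 ∈ Z ↔ (Φ i j).1 ∈ Z)) :
    (Finset.univ.filter fun i : Fin m => allNeg Ψ i ∧ ∀ j, (Ψ i j).1 ∉ Z)
      = (Finset.univ.filter fun i : Fin m => allNeg Φ i ∧ ∀ j, (Φ i j).1 ∉ Z) := by
  ext i
  simp only [Finset.mem_filter, Finset.mem_univ, true_and]
  unfold allNeg
  constructor <;> rintro ⟨h1, h2⟩
  · exact ⟨fun j => by rw [← H1 i j]; exact h1 j, fun j hm => h2 j ((HZ i j).mpr hm)⟩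
  · exact ⟨fun j => by rw [H1 i j]; exact h1 j, fun j hm => h2 j ((HZ i j).mp hm)⟩

lemma pi0_inl_true_iff {Φ Ψ : Formula n m k}
    (H1 : ∀ i j, (Ψ i j).2 = (Φ i j).2) (i : Fin m) (j : Fin k) :
    pi0 Ψ i j = Sum.inl true ↔ pi0 Φ i j = Sum.inl true := by
  have hU : Uset Ψ (∅ : Finset (Fin n)) = Uset Φ ∅ :=
    Uset_congr H1 (fun i j => by simp)
  unfold pi0
  rw [hU, H1 i j]
  split <;> simp

lemma p1step_congr {Φ Ψ : Formula n m k} {σ : P1State n m k}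
    (H1 : ∀ i j, (Ψ i j).2 = (Φ i j).2)
    (H2 : ∀ i j l, (p1step Φ σ).pi i j = Sum.inr l → Ψ i j = Φ i j)
    (H3 : ∀ i j, ((Ψ i j).1 ∈ σ.Z ↔ (Φ i j).1 ∈ σ.Z))
    (Hpos : ∀ i ∈ Uset Φ σ.Z, ∀ j, (Φ i j).2 = true → Ψ i j = Φ i j) :
    (p1step Ψ σ).Z = (p1step Φ σ).Z ∧ (p1step Ψ σ).lastPhi = (p1step Φ σ).lastPhi ∧
      (p1step Ψ σ).lastZ = (p1step Φ σ).lastZ ∧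
      (p1step Ψ σ).stopped = (p1step Φ σ).stopped := by
  have hEeq := Efilter_congr (Z := σ.Z) H1 H3
  rcases Bool.eq_false_or_eq_true σ.stopped with hs | hs
  swap
  · by_cases hEΦ : (Finset.univ.filter
        (fun i : Fin m => allNeg Φ i ∧ ∀ j, (Φ i j).1 ∉ σ.Z)).Nonempty
    · have hEΨ : (Finset.univ.filter
          (fun i : Fin m => allNeg Ψ i ∧ ∀ j, (Ψ i j).1 ∉ σ.Z)).Nonempty := by
        rw [hEeq]; exact hEΦ
      by_cases hk : 0 < k
      · have hφ : (Finset.univ.filter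
            (fun i : Fin m => allNeg Ψ i ∧ ∀ j, (Ψ i j).1 ∉ σ.Z)).min' hEΨ
            = (Finset.univ.filter
            (fun i : Fin m => allNeg Φ i ∧ ∀ j, (Φ i j).1 ∉ σ.Z)).min' hEΦ := by
          congr 1 <;> first | exact hEeq | exact proof_irrel_heq _ _
        have hlit : ∀ j : Fin k, (j : ℕ) < k1 k →
            Ψ ((Finset.univ.filter
              (fun i : Fin m => allNeg Φ i ∧ ∀ j, (Φ i j).1 ∉ σ.Z)).min' hEΦ) j
            = Φ ((Finset.univ.filter
              (fun i : Fin m => allNeg Φ i ∧ ∀ j, (Φ i j).1 ∉ σ.Z)).min' hEΦ) j := by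
          intro j hj
          apply H2 _ j (Φ _ j)
          rw [p1step_main hs hEΦ hk]
          dsimp only
          exact if_pos (Or.inl ⟨rfl, hj⟩)
        have hUx := Ux_congr H1 H3 Hpos
        have hJeq : (Finset.univ.filter
            (fun j : Fin k => (j : ℕ) + 1 < k1 k ∧ Ux Ψ σ.Z ((Ψ ((Finset.univ.filter
              (fun i : Fin m => allNeg Φ i ∧ ∀ j, (Φ i j).1 ∉ σ.Z)).min' hEΦ) j).1) = 0))
            = (Finset.univ.filter
            (fun j : Fin k => (j : ℕ) + 1 < k1 k ∧ Ux Φ σ.Z ((Φ ((Finset.univ.filter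
              (fun i : Fin m => allNeg Φ i ∧ ∀ j, (Φ i j).1 ∉ σ.Z)).min' hEΦ) j).1) = 0)) := by
          ext j
          simp only [Finset.mem_filter, Finset.mem_univ, true_and]
          constructor
          · rintro ⟨h1, h2⟩
            refine ⟨h1, ?_⟩
            rw [← hUx, ← hlit j (by omega)]
            exact h2
          · rintro ⟨h1, h2⟩
            refine ⟨h1, ?_⟩
            rw [hlit j (by omega), hUx]
            exact h2
        have hk1 : k1 k = (k + 1) / 2 := rfl
        rw [p1step_main hs hEΨ hk, p1step_main hs hEΦ hk]
        dsimp only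
        rw [hφ, hJeq]
        refine ⟨?_, rfl, ?_, rfl⟩
        · split
          · next hJ =>
            rw [hlit _ (by
              have h := Finset.min'_mem _ hJ
              simp only [Finset.mem_filter, Finset.mem_univ, true_and] at h
              omega)]
          · next hJ =>
            rw [hlit _ (by
              show (k1 k - 1) ⊓ (k - 1) < k1 k
              omega)]
        · split
          · next hJ =>
            rw [hlit _ (by
              have h := Finset.min'_mem _ hJ
              simp only [Finset.mem_filter, Finset.mem_univ, true_and] at h
              omega)]
          · next hJ =>
            rw [hlit _ (by
              show (k1 k - 1) ⊓ (k - 1) < k1 k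
              omega)]
      · rw [p1step_k0 hs hEΨ hk, p1step_k0 hs hEΦ hk]
        exact ⟨rfl, rfl, rfl, rfl⟩
    · have hEΨ : ¬ (Finset.univ.filter
          (fun i : Fin m => allNeg Ψ i ∧ ∀ j, (Ψ i j).1 ∉ σ.Z)).Nonempty := by
        rw [hEeq]; exact hEΦ
      rw [p1step_noE hs hEΨ, p1step_noE hs hEΦ]
      exact ⟨rfl, rfl, rfl, rfl⟩
  · rw [p1step_stopped (Φ := Ψ) hs, p1step_stopped hs]
    exact ⟨rfl, rfl, rfl, rfl⟩

end Aux3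

section Aux4
variable {n m k : ℕ}

lemma p1_succ (Φ : Formula n m k) (s : ℕ) : p1 Φ (s + 1) = p1step Φ (p1 Φ s) := rfl

lemma pi_update_congr {Φ Ψ : Formula n m k} (σ : P1State n m k) (φt : Fin m)
    {ZΨ ZΦ : Finset (Fin n)} (hZ : ZΨ = ZΦ)
    (H1 : ∀ i j, (Ψ i j).2 = (Φ i j).2)
    (H4 : ∀ i j, ((Ψ i j).1 ∈ ZΦ ↔ (Φ i j).1 ∈ ZΦ))
    (HrevC : ∀ (i : Fin m) (j : Fin k), ((i = φt ∧ (j : ℕ) < k1 k) ∨ (Φ i j).1 ∈ ZΦ ∨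
        (i ∈ Uset Φ ZΦ ∧ pi0 Φ i j = Sum.inl true)) → Ψ i j = Φ i j) :
    (fun (i : Fin m) (j : Fin k) => if (i = φt ∧ (j : ℕ) < k1 k) ∨ (Ψ i j).1 ∈ ZΨ ∨
        (i ∈ Uset Ψ ZΨ ∧ pi0 Ψ i j = Sum.inl true)
      then Sum.inr (Ψ i j) else σ.pi i j)
    = (fun (i : Fin m) (j : Fin k) => if (i = φt ∧ (j : ℕ) < k1 k) ∨ (Φ i j).1 ∈ ZΦ ∨
        (i ∈ Uset Φ ZΦ ∧ pi0 Φ i j = Sum.inl true)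
      then Sum.inr (Φ i j) else σ.pi i j) := by
  subst hZ
  have hU : Uset Ψ ZΨ = Uset Φ ZΨ := Uset_congr H1 H4
  funext i j
  have hC : ((i = φt ∧ (j : ℕ) < k1 k) ∨ (Ψ i j).1 ∈ ZΨ ∨
      (i ∈ Uset Ψ ZΨ ∧ pi0 Ψ i j = Sum.inl true))
      ↔ ((i = φt ∧ (j : ℕ) < k1 k) ∨ (Φ i j).1 ∈ ZΨ ∨
      (i ∈ Uset Φ ZΨ ∧ pi0 Φ i j = Sum.inl true)) := by
    refine or_congr Iff.rfl (or_congr (H4 i j)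
      (and_congr (by rw [hU]) (pi0_inl_true_iff H1 i j)))
  by_cases hc : (i = φt ∧ (j : ℕ) < k1 k) ∨ (Φ i j).1 ∈ ZΨ ∨
      (i ∈ Uset Φ ZΨ ∧ pi0 Φ i j = Sum.inl true)
  · rw [if_pos (hC.mpr hc), if_pos hc, HrevC i j hc]
  · rw [if_neg (fun h => hc (hC.mp h)), if_neg hc]

lemma p1step_congr_full {Φ Ψ : Formula n m k} {σ : P1State n m k}
    (H1 : ∀ i j, (Ψ i j).2 = (Φ i j).2)
    (H2 : ∀ i j l, (p1step Φ σ).pi i j = Sum.inr l → Ψ i j = Φ i j)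
    (H3 : ∀ i j, ((Ψ i j).1 ∈ σ.Z ↔ (Φ i j).1 ∈ σ.Z))
    (Hpos : ∀ i ∈ Uset Φ σ.Z, ∀ j, (Φ i j).2 = true → Ψ i j = Φ i j)
    (H4 : ∀ i j, ((Ψ i j).1 ∈ (p1step Φ σ).Z ↔ (Φ i j).1 ∈ (p1step Φ σ).Z)) :
    p1step Ψ σ = p1step Φ σ := by
  obtain ⟨hZf, hpf, hzf, hsf⟩ := p1step_congr H1 H2 H3 Hpos
  refine P1State.ext' hZf ?_ hpf hzf hsf
  have hEeq := Efilter_congr (Z := σ.Z) H1 H3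
  rcases Bool.eq_false_or_eq_true σ.stopped with hs | hs
  swap
  · by_cases hEΦ : (Finset.univ.filter
        (fun i : Fin m => allNeg Φ i ∧ ∀ j, (Φ i j).1 ∉ σ.Z)).Nonempty
    · have hEΨ : (Finset.univ.filter
          (fun i : Fin m => allNeg Ψ i ∧ ∀ j, (Ψ i j).1 ∉ σ.Z)).Nonempty := by
        rw [hEeq]; exact hEΦ
      by_cases hk : 0 < k
      · have hφ : (Finset.univ.filter
            (fun i : Fin m => allNeg Ψ i ∧ ∀ j, (Ψ i j).1 ∉ σ.Z)).min' hEΨ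
            = (Finset.univ.filter
            (fun i : Fin m => allNeg Φ i ∧ ∀ j, (Φ i j).1 ∉ σ.Z)).min' hEΦ := by
          congr 1
        have hlit : ∀ j : Fin k, (j : ℕ) < k1 k →
            Ψ ((Finset.univ.filter
              (fun i : Fin m => allNeg Φ i ∧ ∀ j, (Φ i j).1 ∉ σ.Z)).min' hEΦ) j
            = Φ ((Finset.univ.filter
              (fun i : Fin m => allNeg Φ i ∧ ∀ j, (Φ i j).1 ∉ σ.Z)).min' hEΦ) j := by
          intro j hj
          apply H2 _ j (Φ _ j)
          rw [p1step_main hs hEΦ hk]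
          dsimp only
          exact if_pos (Or.inl ⟨rfl, hj⟩)
        have hUx := Ux_congr H1 H3 Hpos
        have hJeq : (Finset.univ.filter
            (fun j : Fin k => (j : ℕ) + 1 < k1 k ∧ Ux Ψ σ.Z ((Ψ ((Finset.univ.filter
              (fun i : Fin m => allNeg Φ i ∧ ∀ j, (Φ i j).1 ∉ σ.Z)).min' hEΦ) j).1) = 0))
            = (Finset.univ.filter
            (fun j : Fin k => (j : ℕ) + 1 < k1 k ∧ Ux Φ σ.Z ((Φ ((Finset.univ.filter
              (fun i : Fin m => allNeg Φ i ∧ ∀ j, (Φ i j).1 ∉ σ.Z)).min' hEΦ) j).1) = 0)) := by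
          ext j
          simp only [Finset.mem_filter, Finset.mem_univ, true_and]
          constructor
          · rintro ⟨h1, h2⟩
            refine ⟨h1, ?_⟩
            rw [← hUx, ← hlit j (by omega)]
            exact h2
          · rintro ⟨h1, h2⟩
            refine ⟨h1, ?_⟩
            rw [hlit j (by omega), hUx]
            exact h2
        rw [p1step_main hs hEΦ hk] at H4 hZf
        rw [p1step_main hs hEΨ hk] at hZf
        dsimp only at H4 hZf
        rw [hφ, hJeq] at hZf
        have HrevC : ∀ (i : Fin m) (j : Fin k), ((i = (Finset.univ.filter
              (fun i : Fin m => allNeg Φ i ∧ ∀ j, (Φ i j).1 ∉ σ.Z)).min' hEΦ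
              ∧ (j : ℕ) < k1 k) ∨
            (Φ i j).1 ∈ (p1step Φ σ).Z ∨
            (i ∈ Uset Φ (p1step Φ σ).Z ∧ pi0 Φ i j = Sum.inl true)) → Ψ i j = Φ i j := by
          intro i j hc
          refine H2 i j (Φ i j) ?_
          rw [p1step_main hs hEΦ hk] at hc ⊢
          dsimp only at hc ⊢
          exact if_pos hc
        rw [p1step_main hs hEΦ hk] at HrevC
        dsimp only at HrevC
        rw [p1step_main hs hEΨ hk, p1step_main hs hEΦ hk]
        dsimp only
        rw [hφ, hJeq]
        exact pi_update_congr σ _ hZf H1 H4 HrevC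
      · rw [p1step_k0 hs hEΨ hk, p1step_k0 hs hEΦ hk]
    · have hEΨ : ¬ (Finset.univ.filter
          (fun i : Fin m => allNeg Ψ i ∧ ∀ j, (Ψ i j).1 ∉ σ.Z)).Nonempty := by
        rw [hEeq]; exact hEΦ
      rw [p1step_noE hs hEΨ, p1step_noE hs hEΦ]
  · rw [p1step_stopped (Φ := Ψ) hs, p1step_stopped hs]

end Aux4

section Aux5
variable {n m k : ℕ}

/-- `Ψ` agrees with `Φ` on everything revealed at time `t`. -/
def agrees (Φ Ψ : Formula n m k) (t : ℕ) : Prop :=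
  (∀ i j, (Ψ i j).2 = (Φ i j).2) ∧
  (∀ i j l, (p1 Φ t).pi i j = Sum.inr l → Ψ i j = l) ∧
  (∀ i j b, (p1 Φ t).pi i j = Sum.inl b → (Ψ i j).1 ∉ (p1 Φ t).Z)

lemma agrees_refl (Φ : Formula n m k) (t : ℕ) : agrees Φ Φ t :=
  ⟨fun _ _ => rfl, fun _ _ _ h => pi_inr h, fun _ _ _ h => not_mem_Z_of_inl h⟩

lemma state_eq_of_agrees {Φ Ψ : Formula n m k} {t : ℕ} (h : agrees Φ Ψ t) :
    ∀ s, s ≤ t → p1 Ψ s = p1 Φ s := by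
  obtain ⟨H1, H2, H3⟩ := h
  intro s
  induction s with
  | zero =>
    intro _
    refine P1State.ext' rfl ?_ rfl rfl rfl
    funext i j
    have hU : Uset Ψ (∅ : Finset (Fin n)) = Uset Φ ∅ :=
      Uset_congr H1 (fun i j => by simp)
    show pi0 Ψ i j = pi0 Φ i j
    unfold pi0
    rw [hU, H1 i j]
    by_cases hc : i ∈ Uset Φ ∅ ∧ (Φ i j).2 = true
    · rw [if_pos hc, if_pos hc]
      have h0 : (p1 Φ 0).pi i j = Sum.inr (Φ i j) := by
        show pi0 Φ i j = _
        unfold pi0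
        rw [if_pos hc]
      rw [H2 i j (Φ i j) (pi_mono (Nat.zero_le t) h0)]
    · rw [if_neg hc, if_neg hc]
  | succ s ih =>
    intro hst
    have hss : s ≤ t := Nat.le_of_succ_le hst
    have hIH := ih hss
    have H2' : ∀ i j l, (p1step Φ (p1 Φ s)).pi i j = Sum.inr l → Ψ i j = Φ i j := by
      intro i j l hrev
      have h1 : (p1 Φ (s+1)).pi i j = Sum.inr l := hrev
      have h2 := pi_mono hst h1
      exact (H2 i j l h2).trans (pi_inr h2).symm
    have H3' : ∀ i j, ((Ψ i j).1 ∈ (p1 Φ s).Z ↔ (Φ i j).1 ∈ (p1 Φ s).Z) := by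
      intro i j
      rcases pi_spec Φ t i j with hsp | hsp
      · have hΦ : (Φ i j).1 ∉ (p1 Φ t).Z := not_mem_Z_of_inl hsp
        have hΨ : (Ψ i j).1 ∉ (p1 Φ t).Z := H3 i j _ hsp
        have hsub := Z_mono (Φ := Φ) hss
        exact iff_of_false (fun hm => hΨ (hsub hm)) (fun hm => hΦ (hsub hm))
      · rw [H2 i j _ hsp, pi_inr hsp]
    have H4' : ∀ i j, ((Ψ i j).1 ∈ (p1step Φ (p1 Φ s)).Z
        ↔ (Φ i j).1 ∈ (p1step Φ (p1 Φ s)).Z) := by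
      intro i j
      rcases pi_spec Φ t i j with hsp | hsp
      · have hΦ : (Φ i j).1 ∉ (p1 Φ t).Z := not_mem_Z_of_inl hsp
        have hΨ : (Ψ i j).1 ∉ (p1 Φ t).Z := H3 i j _ hsp
        have hsub : (p1 Φ (s+1)).Z ⊆ (p1 Φ t).Z := Z_mono hst
        exact iff_of_false (fun hm => hΨ (hsub hm)) (fun hm => hΦ (hsub hm))
      · rw [H2 i j _ hsp, pi_inr hsp]
    have Hpos' : ∀ i ∈ Uset Φ (p1 Φ s).Z, ∀ j, (Φ i j).2 = true → Ψ i j = Φ i j := by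
      intro i hi j hj
      exact H2 i j (Φ i j) (pi_mono hss (Urev hi hj))
    show p1step Ψ (p1 Ψ s) = p1step Φ (p1 Φ s)
    rw [hIH]
    exact p1step_congr_full H1 H2' H3' Hpos' H4'

lemma state_eq_of_cls {Φ Ψ : Formula n m k} {t : ℕ}
    (Hp : ∀ s ≤ t, (p1 Ψ s).pi = (p1 Φ s).pi) :
    ∀ s ≤ t, p1 Ψ s = p1 Φ s := by
  have H1 : ∀ i j, (Ψ i j).2 = (Φ i j).2 := by
    intro i j
    have h0 := congrFun (congrFun (Hp 0 (Nat.zero_le t)) i) j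
    rcases pi_spec Φ 0 i j with hsp | hsp
    · rw [hsp] at h0
      exact pi_inl h0
    · rw [hsp] at h0
      rw [pi_inr h0]
  intro s
  induction s with
  | zero =>
    intro _
    exact P1State.ext' rfl (Hp 0 (Nat.zero_le t)) rfl rfl rfl
  | succ s ih =>
    intro hst
    have hss : s ≤ t := Nat.le_of_succ_le hst
    have hIH := ih hss
    have H2' : ∀ i j l, (p1step Φ (p1 Φ s)).pi i j = Sum.inr l → Ψ i j = Φ i j := by
      intro i j l hrev
      have hΦ1 : (p1 Φ (s+1)).pi i j = Sum.inr l := hrev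
      have hΨ1 : (p1 Ψ (s+1)).pi i j = Sum.inr l := by
        rw [Hp (s+1) hst]; exact hΦ1
      rw [pi_inr hΨ1, pi_inr hΦ1]
    have H3' : ∀ i j, ((Ψ i j).1 ∈ (p1 Φ s).Z ↔ (Φ i j).1 ∈ (p1 Φ s).Z) := by
      intro i j
      rcases pi_spec Φ s i j with hsp | hsp
      · have hΦ := not_mem_Z_of_inl hsp
        have hΨ' : (p1 Ψ s).pi i j = Sum.inl (Φ i j).2 := by
          rw [Hp s hss]; exact hsp
        have hΨ := not_mem_Z_of_inl hΨ'
        rw [hIH] at hΨ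
        exact iff_of_false hΨ hΦ
      · have hΨ' : (p1 Ψ s).pi i j = Sum.inr (Φ i j) := by
          rw [Hp s hss]; exact hsp
        rw [pi_inr hΨ']
    have Hpos' : ∀ i ∈ Uset Φ (p1 Φ s).Z, ∀ j, (Φ i j).2 = true → Ψ i j = Φ i j := by
      intro i hi j hj
      have hr := Urev hi hj
      have hΨ' : (p1 Ψ s).pi i j = Sum.inr (Φ i j) := by
        rw [Hp s hss]; exact hr
      exact pi_inr hΨ'
    obtain ⟨hZf, hpf, hzf, hsf⟩ := p1step_congr H1 H2' H3' Hpos'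
    have hre : p1 Ψ (s+1) = p1step Ψ (p1 Φ s) := by
      rw [p1_succ, hIH]
    refine P1State.ext' ?_ (Hp (s+1) hst) ?_ ?_ ?_ <;> rw [hre, p1_succ]
    · exact hZf
    · exact hpf
    · exact hzf
    · exact hsf

lemma mem_cls_iff {Φ Ψ : Formula n m k} {t : ℕ} :
    Ψ ∈ cls t Φ ↔ agrees Φ Ψ t := by
  unfold cls
  simp only [Finset.mem_filter, Finset.mem_univ, true_and]
  constructor
  · intro h
    have hstate := state_eq_of_cls h
    refine ⟨?_, ?_, ?_⟩
    · intro i j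
      have h0 := congrFun (congrFun (h 0 (Nat.zero_le t)) i) j
      rcases pi_spec Φ 0 i j with hsp | hsp
      · rw [hsp] at h0
        exact pi_inl h0
      · rw [hsp] at h0
        rw [pi_inr h0]
    · intro i j l hl
      have hΨ : (p1 Ψ t).pi i j = Sum.inr l := by rw [h t le_rfl]; exact hl
      exact pi_inr hΨ
    · intro i j b hb
      have hΨ : (p1 Ψ t).pi i j = Sum.inl b := by rw [h t le_rfl]; exact hb
      have := not_mem_Z_of_inl hΨ
      rw [hstate t le_rfl] at this
      exact this
  · intro ha s hs
    rw [state_eq_of_agrees ha s hs]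

end Aux5

/-- Proposition 4.  Given `F_t`, the unrevealed variables are
independent and uniform on `V∖Z_t`: for every `Φ` and every map `f : E_t[Φ] → V∖Z_t[Φ]`,
the conditional probability (i.e. the fraction of formulas `Ψ` in the `≡_t`-class of
`Φ`) of the event `∀ (i,j) ∈ E_t[Φ], |Ψ_{ij}| = f(i,j)` equals
`|V∖Z_t[Φ]|^{-|E_t[Φ]|}`. -/
theorem statement9 (ε : ℝ) (hε0 : 0 < ε) (hε1 : ε < 0.1) :
    ∃ k₀ : ℕ, ∀ k : ℕ, k₀ ≤ k → ∃ n₀ : ℕ, ∀ n : ℕ, n₀ ≤ n →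
    ∀ t : ℕ, ∀ Φ : Formula n (mOf ε k n) k,
    ∀ f : Fin (mOf ε k n) × Fin k → Fin n,
      (∀ p ∈ Et Φ t, f p ∉ (p1 Φ t).Z) →
      (((cls t Φ).filter
          (fun Ψ => ∀ p ∈ Et Φ t, (Ψ p.1 p.2).1 = f p)).card : ℝ) /
        ((cls t Φ).card : ℝ)
      = (((n - (p1 Φ t).Z.card : ℕ) : ℝ) ^ (Et Φ t).card)⁻¹ := by
  refine ⟨0, fun k _ => ⟨0, fun n _ => ?_⟩⟩
  intro t Φ f hf
  classical
  have hmemE : ∀ (i : Fin (mOf ε k n)) (j : Fin k),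
      ((i, j) ∈ Et Φ t ↔ ∃ b, (p1 Φ t).pi i j = Sum.inl b) := by
    intro i j
    unfold Et
    simp [Finset.mem_filter]
  set Ψ0 : Formula n (mOf ε k n) k :=
    fun i j => if (i, j) ∈ Et Φ t then (f (i, j), (Φ i j).2) else Φ i j with hΨ0
  have hΨ0cls : Ψ0 ∈ cls t Φ := by
    rw [mem_cls_iff]
    refine ⟨?_, ?_, ?_⟩
    · intro i j
      by_cases h : (i, j) ∈ Et Φ t <;> simp [hΨ0, h]
    · intro i j l hl
      have hnot : (i, j) ∉ Et Φ t := by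
        rw [hmemE]
        rintro ⟨b, hb⟩
        rw [hl] at hb
        exact absurd hb (by simp)
      rw [hΨ0]
      dsimp only
      rw [if_neg hnot]
      exact pi_inr hl
    · intro i j b hb
      have hE : (i, j) ∈ Et Φ t := (hmemE i j).mpr ⟨b, hb⟩
      rw [hΨ0]
      dsimp only
      rw [if_pos hE]
      exact hf (i, j) hE
  have hnum : ((cls t Φ).filter (fun Ψ => ∀ p ∈ Et Φ t, (Ψ p.1 p.2).1 = f p)) = {Ψ0} := by
    ext Ψ
    simp only [Finset.mem_filter, Finset.mem_singleton]
    constructor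
    · rintro ⟨hmem, hval⟩
      obtain ⟨A1, A2, A3⟩ := mem_cls_iff.mp hmem
      funext i j
      rw [hΨ0]
      dsimp only
      by_cases hp : (i, j) ∈ Et Φ t
      · rw [if_pos hp]
        exact Prod.ext (hval (i, j) hp) (A1 i j)
      · rw [if_neg hp]
        rcases pi_spec Φ t i j with hsp | hsp
        · exact absurd ((hmemE i j).mpr ⟨_, hsp⟩) hp
        · rw [A2 i j _ hsp, pi_inr hsp]
    · rintro rfl
      refine ⟨hΨ0cls, fun p hp => ?_⟩
      show (Ψ0 p.1 p.2).1 = f p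
      rw [hΨ0]
      dsimp only
      rw [if_pos (show (p.1, p.2) ∈ Et Φ t from hp)]
  have hden : (cls t Φ).card = (n - (p1 Φ t).Z.card) ^ (Et Φ t).card := by
    have hbij : (cls t Φ).card = ((Et Φ t).pi (fun _ => ((p1 Φ t).Z)ᶜ)).card := by
      apply Finset.card_bij' (i := fun Ψ _ => fun p _ => (Ψ p.1 p.2).1)
        (j := fun g _ => fun i j =>
          if h : (i, j) ∈ Et Φ t then (g (i, j) h, (Φ i j).2) else Φ i j)
      · intro Ψ hΨ
        rw [Finset.mem_pi]
        intro p hp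
        obtain ⟨A1, A2, A3⟩ := mem_cls_iff.mp hΨ
        obtain ⟨b, hb⟩ := (hmemE p.1 p.2).mp hp
        rw [Finset.mem_compl]
        exact A3 p.1 p.2 b hb
      · intro g hg
        rw [Finset.mem_pi] at hg
        rw [mem_cls_iff]
        refine ⟨?_, ?_, ?_⟩
        · intro i j
          by_cases h : (i, j) ∈ Et Φ t <;> simp [h]
        · intro i j l hl
          have hnot : (i, j) ∉ Et Φ t := by
            rw [hmemE]
            rintro ⟨b, hb⟩
            rw [hl] at hb
            exact absurd hb (by simp)
          dsimp only
          rw [dif_neg hnot]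
          exact pi_inr hl
        · intro i j b hb
          have hE : (i, j) ∈ Et Φ t := (hmemE i j).mpr ⟨b, hb⟩
          dsimp only
          rw [dif_pos hE]
          have := hg (i, j) hE
          rw [Finset.mem_compl] at this
          exact this
      · intro Ψ hΨ
        obtain ⟨A1, A2, A3⟩ := mem_cls_iff.mp hΨ
        funext i j
        dsimp only
        by_cases hp : (i, j) ∈ Et Φ t
        · rw [dif_pos hp]
          exact Prod.ext rfl (A1 i j).symm
        · rw [dif_neg hp]
          rcases pi_spec Φ t i j with hsp | hsp
          · exact absurd ((hmemE i j).mpr ⟨_, hsp⟩) hp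
          · exact (A2 i j _ hsp).symm
      · intro g hg
        funext p hp
        dsimp only
        rw [dif_pos (show (p.1, p.2) ∈ Et Φ t from hp)]
    rw [hbij, Finset.card_pi]
    simp [Finset.card_compl, Finset.prod_const]
  rw [hnum, hden, Finset.card_singleton, Nat.cast_pow, Nat.cast_one, one_div]

end RandomKSAT
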